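/- Let k be a positive integer, let π be a permutation in I_k, and suppose an element x of π occurs as the i-th smallest element of the image of some embedding of the decreasing permutation δ_k into π. Then the rank of x equals i. Consequently, x occupies the same position (i-th smallest) in every copy of δ_k in π to which it belongs. -/

import Mathlib

/-- `π` contains a decreasing subsequence of length `k`. Permutations avoiding
`δ_{k+1}` (i.e. members of `I_k`) are those with `¬ HasDecSeq π (k+1)`. -/
def HasDecSeq {n : ℕ} (π : Equiv.Perm (Fin n)) (k : ℕ) : Prop :=
  ∃ q : Fin k → Fin n, StrictMono q ∧ StrictAnti fun i => π (q i)

/-- There is a decreasing subsequence of `π` of length `t` whose maximum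
(first and topmost) element is the point at position `p`. -/
def DecSeqFrom {n : ℕ} (π : Equiv.Perm (Fin n)) (p : Fin n) (t : ℕ) : Prop :=
  ∃ q : Fin t → Fin n, StrictMono q ∧ (StrictAnti fun i => π (q i)) ∧
    (∀ i, p ≤ q i) ∧ ∃ i, q i = p

/-- The rank of the element of `π` at position `p`: the largest `t` such that this
element occurs as the maximum of a subset of `π` whose pattern is `δ_t`. -/
noncomputable def rankAt {n : ℕ} (π : Equiv.Perm (Fin n)) (p : Fin n) : ℕ :=
  sSup {t | DecSeqFrom π p t}

lemma rankAt_eq_of_copy {n k : ℕ} (π : Equiv.Perm (Fin n))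
    (hπ : ¬ HasDecSeq π (k + 1)) (p : Fin n)
    (q : Fin k → Fin n) (j : Fin k)
    (hq : StrictMono q) (hq' : StrictAnti fun t => π (q t)) (hqj : q j = p) :
    rankAt π p = k - (j : ℕ) := by
  have hjk : (j : ℕ) < k := j.isLt
  -- membership
  have hmem : DecSeqFrom π p (k - (j : ℕ)) := by
    refine ⟨fun m => q ⟨(j : ℕ) + m, by omega⟩, ?_, ?_, ?_, ?_⟩
    · intro a b hab
      apply hq
      simp only [Fin.lt_def]
      exact Nat.add_lt_add_left hab _
    · intro a b hab
      apply hq'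
      simp only [Fin.lt_def]
      exact Nat.add_lt_add_left hab _
    · intro m
      rw [← hqj]
      exact hq.monotone (by simp [Fin.le_def])
    · exact ⟨⟨0, by omega⟩, by rw [← hqj]; exact congrArg q (Fin.ext (by simp))⟩
  -- upper bound
  have hbd : ∀ t ∈ {t | DecSeqFrom π p t}, t ≤ k - (j : ℕ) := by
    rintro t ⟨r, hr, hr', hge, i0, hi0⟩
    by_contra hlt
    push_neg at hlt
    have ht0 : 0 < t := by omega
    have hr0 : r ⟨0, ht0⟩ = p := by
      refine le_antisymm ?_ (hge _)
      rw [← hi0]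
      exact hr.monotone (by simp [Fin.le_def])
    set s : Fin (k + 1) → Fin n := fun m =>
      if h : (m : ℕ) < (j : ℕ) then q ⟨m, by omega⟩
      else r ⟨(m : ℕ) - (j : ℕ), by omega⟩ with hs
    have smono : StrictMono s := by
      intro a b hab
      simp only [hs]
      rcases lt_or_ge (a : ℕ) (j : ℕ) with ha | ha
      · rw [dif_pos ha]
        rcases lt_or_ge (b : ℕ) (j : ℕ) with hb | hb
        · rw [dif_pos hb]; exact hq hab
        · rw [dif_neg (not_lt.2 hb)]
          have h1 : q ⟨(a : ℕ), by omega⟩ < q j := hq (by simpa [Fin.lt_def] using ha)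
          have h2 : p ≤ r ⟨(b : ℕ) - (j : ℕ), by omega⟩ := hge _
          rw [hqj] at h1
          exact lt_of_lt_of_le h1 h2
      · have hb : ¬ (b : ℕ) < (j : ℕ) := by
          have : (a : ℕ) < (b : ℕ) := hab
          omega
        rw [dif_neg (not_lt.2 ha), dif_neg hb]
        apply hr
        simp only [Fin.lt_def]
        have : (a : ℕ) < (b : ℕ) := hab
        omega
    have santi : StrictAnti fun m => π (s m) := by
      intro a b hab
      simp only [hs]
      rcases lt_or_ge (a : ℕ) (j : ℕ) with ha | ha
      · rw [dif_pos ha]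
        rcases lt_or_ge (b : ℕ) (j : ℕ) with hb | hb
        · rw [dif_pos hb]; exact hq' hab
        · rw [dif_neg (not_lt.2 hb)]
          have h1 : π (q j) < π (q ⟨(a : ℕ), by omega⟩) := by
            have := hq' (show (⟨(a : ℕ), by omega⟩ : Fin k) < j by
              simpa [Fin.lt_def] using ha)
            simpa using this
          rw [hqj] at h1
          have h2 : π (r ⟨(b : ℕ) - (j : ℕ), by omega⟩) ≤ π (r ⟨0, ht0⟩) := by
            have := hr'.antitone (show (⟨0, ht0⟩ : Fin t) ≤ ⟨(b : ℕ) - (j : ℕ), by omega⟩ by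
              simp [Fin.le_def])
            simpa using this
          rw [hr0] at h2
          exact lt_of_le_of_lt h2 h1
      · have hb : ¬ (b : ℕ) < (j : ℕ) := by
          have : (a : ℕ) < (b : ℕ) := hab
          omega
        rw [dif_neg (not_lt.2 ha), dif_neg hb]
        have := hr' (show (⟨(a : ℕ) - (j : ℕ), by omega⟩ : Fin t) < ⟨(b : ℕ) - (j : ℕ), by omega⟩ by
          have : (a : ℕ) < (b : ℕ) := hab
          simp only [Fin.lt_def]
          omega)
        simpa using this
    exact hπ ⟨s, smono, santi⟩
  unfold rankAt
  exact le_antisymm (csSup_le ⟨_, hmem⟩ hbd) (le_csSup ⟨_, hbd⟩ hmem)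

theorem rank_in_delta_k {n k : ℕ} (hk : 0 < k) (π : Equiv.Perm (Fin n))
    (hπ : ¬ HasDecSeq π (k + 1)) (p : Fin n) (i : ℕ)
    (q : Fin k → Fin n) (j : Fin k)
    (hq : StrictMono q) (hq' : StrictAnti fun t => π (q t)) (hqj : q j = p)
    (hi : k - (j : ℕ) = i) :
    rankAt π p = i ∧
      ∀ (q' : Fin k → Fin n) (j' : Fin k), StrictMono q' →
        (StrictAnti fun t => π (q' t)) → q' j' = p → k - (j' : ℕ) = i := by
  have h1 := rankAt_eq_of_copy π hπ p q j hq hq' hqj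
  refine ⟨by omega, ?_⟩
  intro q' j' hq1 hq2 hq3
  have h2 := rankAt_eq_of_copy π hπ p q' j' hq1 hq2 hq3
  omega
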